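/- Fenchel's theorem: the total curvature of any closed smooth space curve is at least 2π; that is, for a closed unit-speed curve γ : [a,b] → ℝ³ with γ(a) = γ(b) and γ'(a) = γ'(b), one has ∫_a^b |γ''(s)| ds ≥ 2π. -/

import Mathlib

open Set

open Real MeasureTheory RealInnerProductSpace Filter in
/-- Key lemma: for a `C¹` curve `T` on the unit sphere, the angle between `T s` and `T t`
is at most the arc length, expressed in the form `cos (arclength) ≤ ⟪T s, T t⟫` when the
arc length is at most `π`. -/
theorem fenchel_key {a b : ℝ} (hab : a < b) {T T' : ℝ → EuclideanSpace ℝ (Fin 3)}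
    (hd : ∀ u ∈ Icc a b, HasDerivWithinAt T (T' u) (Icc a b) u)
    (hcont : ContinuousOn T' (Icc a b))
    (hunit : ∀ u ∈ Icc a b, ‖T u‖ = 1)
    {s t : ℝ} (has : a ≤ s) (hst : s ≤ t) (htb : t ≤ b)
    (hpi : (∫ u in s..t, ‖T' u‖) ≤ π) :
    Real.cos (∫ u in s..t, ‖T' u‖) ≤ ⟪T s, T t⟫ := by
  have hsmem : s ∈ Icc a b := ⟨has, hst.trans htb⟩
  have htmem : t ∈ Icc a b := ⟨has.trans hst, htb⟩
  have hTcont : ContinuousOn T (Icc a b) := fun u hu => (hd u hu).continuousWithinAt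
  have hNcont : ContinuousOn (fun u => ‖T' u‖) (Icc a b) := hcont.norm
  have hInt : ∀ u ∈ Icc a b, ∀ v ∈ Icc a b,
      IntervalIntegrable (fun x => ‖T' x‖) volume u v := fun u hu v hv =>
    (hNcont.mono (uIcc_subset_Icc hu hv)).intervalIntegrable
  -- orthogonality of T and T'
  have hTT' : ∀ u ∈ Icc a b, ⟪T u, T' u⟫ = 0 := by
    intro u hu
    have h1 : HasDerivWithinAt (fun x => ⟪T x, T x⟫) (⟪T u, T' u⟫ + ⟪T' u, T u⟫) (Icc a b) u :=
      (hd u hu).inner ℝ (hd u hu)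
    have h2 : HasDerivWithinAt (fun x : ℝ => ⟪T x, T x⟫) 0 (Icc a b) u := by
      refine (hasDerivWithinAt_const u (Icc a b) (1:ℝ)).congr (fun x hx => ?_) ?_
      · rw [real_inner_self_eq_norm_sq, hunit x hx]; norm_num
      · rw [real_inner_self_eq_norm_sq, hunit u hu]; norm_num
    have e1 := h1.derivWithin (uniqueDiffOn_Icc hab u hu)
    rw [h2.derivWithin (uniqueDiffOn_Icc hab u hu)] at e1
    have e2 := real_inner_comm (T u) (T' u)
    linarith
  -- Cauchy-Schwarz bound on the derivative of u ↦ ⟪T u, T s⟫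
  have hg1 : ∀ u ∈ Icc a b, |⟪T u, T s⟫| ≤ 1 := by
    intro u hu
    have h := abs_real_inner_le_norm (T u) (T s)
    rwa [hunit u hu, hunit s hsmem, mul_one] at h
  have hbd : ∀ u ∈ Icc a b,
      |⟪T' u, T s⟫| ≤ ‖T' u‖ * Real.sqrt (1 - ⟪T u, T s⟫ ^ 2) := by
    intro u hu
    set c := ⟪T u, T s⟫ with hc
    have hw : ‖T s - c • T u‖ = Real.sqrt (1 - c ^ 2) := by
      rw [← Real.sqrt_sq (norm_nonneg (T s - c • T u))]
      congr 1
      have h1 : ⟪T s, c • T u⟫ = c * c := by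
        rw [real_inner_smul_right, real_inner_comm]
      have h2 : ‖c • T u‖ ^ 2 = c ^ 2 := by
        rw [norm_smul, hunit u hu, mul_one, Real.norm_eq_abs, sq_abs]
      rw [norm_sub_sq_real, h1, hunit s hsmem, h2]; ring
    have horth : ⟪T' u, T s⟫ = ⟪T' u, T s - c • T u⟫ := by
      have h0 : ⟪T' u, T u⟫ = 0 := by rw [real_inner_comm]; exact hTT' u hu
      rw [inner_sub_right, real_inner_smul_right, h0, mul_zero, sub_zero]
    calc |⟪T' u, T s⟫| = |⟪T' u, T s - c • T u⟫| := by rw [horth]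
      _ ≤ ‖T' u‖ * ‖T s - c • T u‖ := abs_real_inner_le_norm _ _
      _ = ‖T' u‖ * Real.sqrt (1 - c ^ 2) := by rw [hw]
  -- the arclength function
  set ℓ : ℝ → ℝ := fun u => ∫ x in s..u, ‖T' x‖ with hℓdef
  have hℓd : ∀ u ∈ Icc a b, HasDerivWithinAt ℓ ‖T' u‖ (Icc a b) u := by
    intro u hu
    haveI : Fact (u ∈ Icc a b) := ⟨hu⟩
    exact intervalIntegral.integral_hasDerivWithinAt_right (hInt s hsmem u hu)
      (hNcont.stronglyMeasurableAtFilter_nhdsWithin measurableSet_Icc u)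
      (hNcont u hu)
  have hℓcont : ContinuousOn ℓ (Icc a b) := fun u hu => (hℓd u hu).continuousWithinAt
  -- main ε-perturbed estimate
  have hkey : ∀ ε : ℝ, 0 < ε →
      Real.arccos (⟪T t, T s⟫ / (1 + ε)) ≤ ℓ t + Real.arccos (1 / (1 + ε)) := by
    intro ε hε
    have h1ε : (0:ℝ) < 1 + ε := by linarith
    set F : ℝ → ℝ := fun u => ℓ u - Real.arccos (⟪T u, T s⟫ / (1 + ε)) with hF
    have hgcont : ContinuousOn (fun u => ⟪T u, T s⟫) (Icc a b) :=
      hTcont.inner continuousOn_const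
    have hFd : ∀ u ∈ Ioo s t, HasDerivAt F
        (‖T' u‖ + 1 / Real.sqrt (1 - (⟪T u, T s⟫ / (1 + ε)) ^ 2) * (⟪T' u, T s⟫ / (1 + ε))) u := by
      intro u hu
      have humem : u ∈ Icc a b := ⟨has.trans hu.1.le, hu.2.le.trans htb⟩
      have hnhds : Icc a b ∈ nhds u :=
        Icc_mem_nhds (lt_of_le_of_lt has hu.1) (lt_of_lt_of_le hu.2 htb)
      have hTat : HasDerivAt T (T' u) u := (hd u humem).hasDerivAt hnhds
      have hℓat : HasDerivAt ℓ ‖T' u‖ u := (hℓd u humem).hasDerivAt hnhds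
      have hgat : HasDerivAt (fun x => ⟪T x, T s⟫) ⟪T' u, T s⟫ u := by
        have h := hTat.inner ℝ (hasDerivAt_const u (T s))
        simpa using h
      have hy : |⟪T u, T s⟫ / (1 + ε)| < 1 := by
        rw [abs_div, abs_of_pos h1ε]
        exact (div_lt_one h1ε).2 (lt_of_le_of_lt (hg1 u humem) (by linarith))
      have hy1 : ⟪T u, T s⟫ / (1 + ε) ≠ -1 := by
        intro h; rw [h] at hy; norm_num at hy
      have hy2 : ⟪T u, T s⟫ / (1 + ε) ≠ 1 := by
        intro h; rw [h] at hy; norm_num at hy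
      have harc : HasDerivAt (fun x => Real.arccos (⟪T x, T s⟫ / (1 + ε)))
          (-(1 / Real.sqrt (1 - (⟪T u, T s⟫ / (1 + ε)) ^ 2)) * (⟪T' u, T s⟫ / (1 + ε))) u :=
        by have := (Real.hasDerivAt_arccos hy1 hy2).comp u (hgat.div_const (1 + ε)); exact this
      have h := hℓat.sub harc
      exact h.congr_deriv (by ring)
    have hmono : MonotoneOn F (Icc s t) := by
      apply monotoneOn_of_deriv_nonneg (convex_Icc s t)
      · apply ContinuousOn.sub
        · exact hℓcont.mono (Icc_subset_Icc has htb)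
        · exact Real.continuous_arccos.comp_continuousOn
            ((hgcont.mono (Icc_subset_Icc has htb)).div_const _)
      · intro u hu
        rw [interior_Icc] at hu
        exact ((hFd u hu).differentiableAt).differentiableWithinAt
      · intro u hu
        rw [interior_Icc] at hu
        rw [(hFd u hu).deriv]
        have humem : u ∈ Icc a b := ⟨has.trans hu.1.le, hu.2.le.trans htb⟩
        set g := ⟪T u, T s⟫ with hgdef
        set y := g / (1 + ε) with hydef
        have hy2 : y ^ 2 < 1 := by
          have h1 : |y| < 1 := by
            rw [hydef, abs_div, abs_of_pos h1ε]
            exact (div_lt_one h1ε).2 (lt_of_le_of_lt (hg1 u humem) (by linarith))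
          nlinarith [abs_nonneg y, sq_abs y]
        have hsy0 : 0 < Real.sqrt (1 - y ^ 2) := Real.sqrt_pos.2 (by linarith)
        have hsy : Real.sqrt (1 - g ^ 2) ≤ (1 + ε) * Real.sqrt (1 - y ^ 2) := by
          have h1 : (1 + ε) * Real.sqrt (1 - y ^ 2) = Real.sqrt ((1 + ε) ^ 2 * (1 - y ^ 2)) := by
            rw [Real.sqrt_mul (by positivity), Real.sqrt_sq h1ε.le]
          rw [h1]
          apply Real.sqrt_le_sqrt
          have h2 : (1 + ε) ^ 2 * (1 - y ^ 2) = (1 + ε) ^ 2 - g ^ 2 := by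
            rw [hydef]; field_simp
          rw [h2]
          nlinarith
        have h2 : |⟪T' u, T s⟫| ≤ ‖T' u‖ * ((1 + ε) * Real.sqrt (1 - y ^ 2)) :=
          (hbd u humem).trans (mul_le_mul_of_nonneg_left hsy (norm_nonneg _))
        have h3 : |1 / Real.sqrt (1 - y ^ 2) * (⟪T' u, T s⟫ / (1 + ε))| ≤ ‖T' u‖ := by
          rw [abs_mul, abs_of_pos (by positivity : (0:ℝ) < 1 / Real.sqrt (1 - y ^ 2)),
            abs_div, abs_of_pos h1ε]
          rw [div_mul_eq_mul_div, one_mul, div_div, div_le_iff₀ (by positivity)]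
          exact h2.trans_eq (by ring)
        have := (abs_le.1 h3).1
        linarith
    have hFst := hmono (left_mem_Icc.2 hst) (right_mem_Icc.2 hst) hst
    have hℓs : ℓ s = 0 := intervalIntegral.integral_same
    have hgs : ⟪T s, T s⟫ = 1 := by
      rw [real_inner_self_eq_norm_sq, hunit s hsmem]; norm_num
    simp only [hF, hℓs, hgs] at hFst
    linarith
  -- pass to the limit ε → 0⁺
  have hlim : Real.arccos ⟪T t, T s⟫ ≤ ℓ t := by
    have hden : Tendsto (fun ε : ℝ => 1 + ε) (nhdsWithin 0 (Ioi 0)) (nhds 1) := by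
      have h : Tendsto (fun ε : ℝ => 1 + ε) (nhds 0) (nhds (1 + 0)) :=
        (continuous_const.add continuous_id).tendsto 0
      rw [add_zero] at h
      exact h.mono_left nhdsWithin_le_nhds
    have h1 : Tendsto (fun ε : ℝ => Real.arccos (⟪T t, T s⟫ / (1 + ε)))
        (nhdsWithin 0 (Ioi 0)) (nhds (Real.arccos ⟪T t, T s⟫)) := by
      have h2 : Tendsto (fun ε : ℝ => ⟪T t, T s⟫ / (1 + ε)) (nhdsWithin 0 (Ioi 0))
          (nhds ⟪T t, T s⟫) := by
        have h := (hden.inv₀ one_ne_zero).const_mul (⟪T t, T s⟫ : ℝ)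
        simpa [div_eq_mul_inv] using h
      exact (Real.continuous_arccos.continuousAt.tendsto).comp h2
    have h2 : Tendsto (fun ε : ℝ => ℓ t + Real.arccos (1 / (1 + ε)))
        (nhdsWithin 0 (Ioi 0)) (nhds (ℓ t)) := by
      have h4 : Tendsto (fun ε : ℝ => Real.arccos (1 / (1 + ε))) (nhdsWithin 0 (Ioi 0))
          (nhds 0) := by
        have h := (Real.continuous_arccos.continuousAt.tendsto).comp (hden.inv₀ one_ne_zero)
        simpa [Real.arccos_one, one_div, Function.comp_def] using h
      have := (tendsto_const_nhds (x := ℓ t)).add h4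
      simpa using this
    refine le_of_tendsto_of_tendsto h1 h2 ?_
    filter_upwards [self_mem_nhdsWithin] with ε hε
    exact hkey ε hε
  have hcos := Real.cos_le_cos_of_nonneg_of_le_pi (Real.arccos_nonneg _) hpi hlim
  rw [Real.cos_arccos (abs_le.1 (hg1 t htmem)).1 (abs_le.1 (hg1 t htmem)).2] at hcos
  rwa [real_inner_comm]

open Real MeasureTheory RealInnerProductSpace in
/-- Fenchel's theorem: the total curvature of a closed smooth space curve is at least `2π`.
For a closed unit-speed curve `γ : [a,b] → ℝ³` with `γ a = γ b` and `γ' a = γ' b`,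
one has `∫_a^b ‖γ''(s)‖ ds ≥ 2π`. -/
theorem fenchel_theorem
    (a b : ℝ) (hab : a < b)
    (γ γ' γ'' : ℝ → EuclideanSpace ℝ (Fin 3))
    (hd1 : ∀ t ∈ Icc a b, HasDerivWithinAt γ (γ' t) (Icc a b) t)
    (hd2 : ∀ t ∈ Icc a b, HasDerivWithinAt γ' (γ'' t) (Icc a b) t)
    (hcont : ContinuousOn γ'' (Icc a b))
    (hunit : ∀ t ∈ Icc a b, ‖γ' t‖ = 1)
    (hc : γ a = γ b) (hc' : γ' a = γ' b) :
    2 * Real.pi ≤ ∫ s in a..b, ‖γ'' s‖ := by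
  by_contra hcon
  push_neg at hcon
  set L := ∫ s in a..b, ‖γ'' s‖ with hL
  have hNcont : ContinuousOn (fun s => ‖γ'' s‖) (Icc a b) := hcont.norm
  have hInt : ∀ u ∈ Icc a b, ∀ v ∈ Icc a b,
      IntervalIntegrable (fun x => ‖γ'' x‖) volume u v := fun u hu v hv =>
    (hNcont.mono (uIcc_subset_Icc hu hv)).intervalIntegrable
  have hamem : a ∈ Icc a b := left_mem_Icc.2 hab.le
  have hbmem : b ∈ Icc a b := right_mem_Icc.2 hab.le
  set ℓ : ℝ → ℝ := fun u => ∫ x in a..u, ‖γ'' x‖ with hℓdef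
  have hℓd : ∀ u ∈ Icc a b, HasDerivWithinAt ℓ ‖γ'' u‖ (Icc a b) u := by
    intro u hu
    haveI : Fact (u ∈ Icc a b) := ⟨hu⟩
    exact intervalIntegral.integral_hasDerivWithinAt_right (hInt a hamem u hu)
      (hNcont.stronglyMeasurableAtFilter_nhdsWithin measurableSet_Icc u)
      (hNcont u hu)
  have hℓcont : ContinuousOn ℓ (Icc a b) := fun u hu => (hℓd u hu).continuousWithinAt
  have hLnonneg : 0 ≤ L := intervalIntegral.integral_nonneg hab.le (fun x _ => norm_nonneg _)
  have hsplit : ∀ u ∈ Icc a b, ∀ v ∈ Icc a b, (∫ x in u..v, ‖γ'' x‖) = ℓ v - ℓ u := by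
    intro u hu v hv
    rw [hℓdef]
    exact (intervalIntegral.integral_interval_sub_left (hInt a hamem v hv)
      (hInt a hamem u hu)).symm
  have hmono : ∀ u ∈ Icc a b, ∀ v ∈ Icc a b, u ≤ v → ℓ u ≤ ℓ v := by
    intro u hu v hv huv
    rw [← sub_nonneg, ← hsplit u hu v hv]
    exact intervalIntegral.integral_nonneg huv (fun x _ => norm_nonneg _)
  have hℓa : ℓ a = 0 := intervalIntegral.integral_same
  have hℓb : ℓ b = L := rfl
  have hpi2 : L / 2 < π := by linarith
  -- find the midpoint of the arclength
  obtain ⟨s₁, hs₁mem, hs₁⟩ : ∃ s₁ ∈ Icc a b, ℓ s₁ = L / 2 := by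
    have hmem : L / 2 ∈ Icc (ℓ a) (ℓ b) := by
      rw [hℓa, hℓb]
      constructor <;> linarith
    obtain ⟨x, hx, hx'⟩ := intermediate_value_Icc hab.le hℓcont hmem
    exact ⟨x, hx, hx'⟩
  -- the two arc inequalities for each point
  have habc : ∀ s ∈ Icc a b, ∃ α β : ℝ, 0 ≤ α ∧ 0 ≤ β ∧ α + β = L / 2 ∧
      Real.cos α ≤ ⟪γ' s, γ' a⟫ ∧ Real.cos β ≤ ⟪γ' s, γ' s₁⟫ := by
    intro s hs
    rcases le_total s s₁ with h | h
    · have hs0 : 0 ≤ ℓ s := by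
        have := hmono a hamem s hs hs.1
        rwa [hℓa] at this
      have hs2 : ℓ s ≤ L / 2 := by
        have := hmono s hs s₁ hs₁mem h
        rwa [hs₁] at this
      refine ⟨ℓ s, L / 2 - ℓ s, hs0, by linarith, by ring, ?_, ?_⟩
      · have hval : (∫ x in a..s, ‖γ'' x‖) = ℓ s := by
          rw [hsplit a hamem s hs, hℓa, sub_zero]
        have hk := fenchel_key hab hd2 hcont hunit (le_refl a) hs.1 hs.2
          (by rw [hval]; linarith)
        rw [hval] at hk
        rwa [real_inner_comm] at hk
      · have hval : (∫ x in s..s₁, ‖γ'' x‖) = L / 2 - ℓ s := by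
          rw [hsplit s hs s₁ hs₁mem, hs₁]
        have hk := fenchel_key hab hd2 hcont hunit hs.1 h hs₁mem.2
          (by rw [hval]; linarith)
        rwa [hval] at hk
    · have hs2 : L / 2 ≤ ℓ s := by
        have := hmono s₁ hs₁mem s hs h
        rwa [hs₁] at this
      have hsL : ℓ s ≤ L := by
        have := hmono s hs b hbmem hs.2
        rwa [hℓb] at this
      refine ⟨L - ℓ s, ℓ s - L / 2, by linarith, by linarith, by ring, ?_, ?_⟩
      · have hval : (∫ x in s..b, ‖γ'' x‖) = L - ℓ s := by
          rw [hsplit s hs b hbmem, hℓb]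
        have hk := fenchel_key hab hd2 hcont hunit hs.1 hs.2 (le_refl b)
          (by rw [hval]; linarith)
        rw [hval] at hk
        rwa [← hc'] at hk
      · have hval : (∫ x in s₁..s, ‖γ'' x‖) = ℓ s - L / 2 := by
          rw [hsplit s₁ hs₁mem s hs, hs₁]
        have hk := fenchel_key hab hd2 hcont hunit hs₁mem.1 h hs.2
          (by rw [hval]; linarith)
        rw [hval] at hk
        rwa [real_inner_comm] at hk
  -- the inner product with γ' a + γ' s₁ never vanishes
  have hzero : ∀ s ∈ Icc a b, ⟪γ' s, γ' a + γ' s₁⟫ ≠ 0 := by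
    intro s hs h0
    rw [inner_add_right] at h0
    obtain ⟨α, β, hα, hβ, hsum, hPα, hQβ⟩ := habc s hs
    have hαπ : α ≤ π := by linarith
    have hβπ : β ≤ π := by linarith
    have h1 : Real.cos β ≤ Real.cos (π - α) := by
      rw [Real.cos_pi_sub]
      linarith
    have h2 : π - α ≤ β := by
      by_contra hcon2
      push_neg at hcon2
      have := Real.strictAntiOn_cos ⟨hβ, hβπ⟩ ⟨by linarith, by linarith⟩ hcon2
      linarith
    linarith
  -- positivity at a
  have hpq : Real.cos (L / 2) ≤ ⟪γ' a, γ' s₁⟫ := by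
    have hval : (∫ x in a..s₁, ‖γ'' x‖) = L / 2 := by
      rw [hsplit a hamem s₁ hs₁mem, hℓa, hs₁, sub_zero]
    have hk := fenchel_key hab hd2 hcont hunit (le_refl a) hs₁mem.1 hs₁mem.2
      (by rw [hval]; linarith)
    rwa [hval] at hk
  have hpqgt : (-1 : ℝ) < ⟪γ' a, γ' s₁⟫ := by
    refine lt_of_lt_of_le ?_ hpq
    have h := Real.strictAntiOn_cos ⟨by linarith, hpi2.le⟩
      ⟨Real.pi_pos.le, le_refl π⟩ hpi2
    rwa [Real.cos_pi] at h
  have hposa : 0 < ⟪γ' a, γ' a + γ' s₁⟫ := by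
    rw [inner_add_right, real_inner_self_eq_norm_sq, hunit a hamem]
    nlinarith
  -- continuity of the relevant inner products
  have hT'cont : ContinuousOn γ' (Icc a b) := fun u hu => (hd2 u hu).continuousWithinAt
  have hPQcont : ContinuousOn (fun u => ⟪γ' u, γ' a + γ' s₁⟫) (Icc a b) :=
    hT'cont.inner continuousOn_const
  -- positivity everywhere
  have hpos : ∀ s ∈ Icc a b, 0 < ⟪γ' s, γ' a + γ' s₁⟫ := by
    intro s hs
    rcases (hzero s hs).lt_or_gt with hneg | hpos'
    · exfalso
      have hcont' : ContinuousOn (fun u => ⟪γ' u, γ' a + γ' s₁⟫) (Icc a s) :=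
        hPQcont.mono (Icc_subset_Icc le_rfl hs.2)
      have h0 : (0:ℝ) ∈ Icc (⟪γ' s, γ' a + γ' s₁⟫) (⟪γ' a, γ' a + γ' s₁⟫) :=
        ⟨hneg.le, hposa.le⟩
      obtain ⟨x, hx, hx0⟩ := intermediate_value_Icc' hs.1 hcont' h0
      exact hzero x (Icc_subset_Icc le_rfl hs.2 hx) hx0
    · exact hpos'
  -- fundamental theorem of calculus
  have hfi : IntervalIntegrable (fun u => ⟪γ' u, γ' a + γ' s₁⟫) volume a b :=
    (hPQcont.mono (by rw [uIcc_of_le hab.le])).intervalIntegrable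
  have hFTC : (∫ u in a..b, ⟪γ' u, γ' a + γ' s₁⟫) =
      ⟪γ b, γ' a + γ' s₁⟫ - ⟪γ a, γ' a + γ' s₁⟫ := by
    apply intervalIntegral.integral_eq_sub_of_hasDeriv_right_of_le hab.le
    · have hγcont : ContinuousOn γ (Icc a b) := fun u hu => (hd1 u hu).continuousWithinAt
      exact hγcont.inner continuousOn_const
    · intro x hx
      have hxm : x ∈ Icc a b := Ioo_subset_Icc_self hx
      have hder : HasDerivWithinAt (fun u => ⟪γ u, γ' a + γ' s₁⟫)
          (⟪γ' x, γ' a + γ' s₁⟫) (Icc a b) x := by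
        have h := (hd1 x hxm).inner ℝ (hasDerivWithinAt_const x (Icc a b) (γ' a + γ' s₁))
        simpa using h
      exact hder.mono_of_mem_nhdsWithin (Icc_mem_nhdsGT_of_mem ⟨hx.1.le, hx.2⟩)
    · exact hfi
  have hposint : 0 < ∫ u in a..b, ⟪γ' u, γ' a + γ' s₁⟫ :=
    intervalIntegral.intervalIntegral_pos_of_pos_on hfi
      (fun x hx => hpos x (Ioo_subset_Icc_self hx)) hab
  rw [hFTC, hc, sub_self] at hposint
  exact lt_irrefl 0 hposint
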